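/- Hahn–Banach theorem for sublinear operators: Let X be a real vector space, Y ⊆ X a vector subspace, F a Dedekind complete Riesz space, S : Y → F subadditive and positively homogeneous, and p : X → F subadditive and positively homogeneous with S(u) ≤ p(u) for all u ∈ Y. Then there exists T : X → F that is subadditive and positively homogeneous, extends S (T(y) = S(y) for y ∈ Y), and satisfies T(x) ≤ p(x) for all x ∈ X. -/

import Mathlib

/-- Hahn–Banach theorem for sublinear operators with values in a
Dedekind complete Riesz space `F`. -/
theorem stmt_5 {X F : Type*}
    [AddCommGroup X] [Module ℝ X]
    [ConditionallyCompleteLattice F] [AddCommGroup F] [Module ℝ F]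
    [CovariantClass F F (· + ·) (· ≤ ·)] [PosSMulMono ℝ F]
    (Y : Submodule ℝ X)
    (S : Y → F)
    (hSsub : ∀ u v : Y, S (u + v) ≤ S u + S v)
    (hShom : ∀ (l : ℝ) (u : Y), 0 ≤ l → S (l • u) = l • S u)
    (p : X → F)
    (hpsub : ∀ x y : X, p (x + y) ≤ p x + p y)
    (hphom : ∀ (l : ℝ) (x : X), 0 ≤ l → p (l • x) = l • p x)
    (hdom : ∀ u : Y, S u ≤ p (u : X)) :
    ∃ T : X → F,
      (∀ x y : X, T (x + y) ≤ T x + T y) ∧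
      (∀ (l : ℝ) (x : X), 0 ≤ l → T (l • x) = l • T x) ∧
      (∀ y : Y, T (y : X) = S y) ∧
      (∀ x : X, T x ≤ p x) := by
  have hS0 : S 0 = 0 := by
    have h := hShom 0 0 le_rfl
    simpa using h
  have hp0 : p 0 = 0 := by
    have h := hphom 0 0 le_rfl
    simpa using h
  set A : X → Set F := fun x => Set.range (fun y : Y => S y + p (x - (y : X))) with hA
  have hmem : ∀ (x : X) (y : Y), S y + p (x - (y : X)) ∈ A x := fun x y => ⟨y, rfl⟩
  have hne : ∀ x, (A x).Nonempty := fun x => ⟨_, hmem x 0⟩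
  have hkey : ∀ y : Y, 0 ≤ S y + p (-(y : X)) := by
    intro y
    have h1 : S 0 ≤ S y + S (-y) := by simpa using hSsub y (-y)
    have h2 : S (-y) ≤ p (-(y : X)) := by simpa using hdom (-y)
    calc (0 : F) = S 0 := hS0.symm
      _ ≤ S y + S (-y) := h1
      _ ≤ S y + p (-(y : X)) := add_le_add le_rfl h2
  have hbdd : ∀ x, BddBelow (A x) := by
    intro x
    refine ⟨-p (-x), ?_⟩
    rintro _ ⟨y, rfl⟩
    show -p (-x) ≤ S y + p (x - (y : X))
    have h3 : p (-(y : X)) ≤ p (-x) + p (x - (y : X)) := by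
      have h := hpsub (-x) (x - (y : X))
      have he : -x + (x - (y : X)) = -(y : X) := by abel
      rwa [he] at h
    have h4 : (0 : F) ≤ p (-x) + (S y + p (x - (y : X))) :=
      calc (0 : F) ≤ S y + p (-(y : X)) := hkey y
        _ ≤ S y + (p (-x) + p (x - (y : X))) := add_le_add le_rfl h3
        _ = p (-x) + (S y + p (x - (y : X))) := by abel
    exact neg_le_iff_add_nonneg.mpr (h4.trans_eq (add_comm _ _))
  set T : X → F := fun x => sInf (A x) with hT
  have hle_p : ∀ x, T x ≤ p x := by
    intro x
    have h := csInf_le (hbdd x) (hmem x 0)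
    simpa [hS0] using h
  have hext : ∀ y : Y, T (y : X) = S y := by
    intro u
    refine le_antisymm ?_ ?_
    · have h := csInf_le (hbdd u) (hmem u u)
      simpa [hp0] using h
    · refine le_csInf (hne _) ?_
      rintro _ ⟨y, rfl⟩
      have h1 : S u ≤ S y + S (u - y) := by
        have := hSsub y (u - y)
        simpa using this
      have h2 : S (u - y) ≤ p ((u : X) - (y : X)) := by
        simpa using hdom (u - y)
      exact h1.trans (add_le_add le_rfl h2)
  have hsub : ∀ x y : X, T (x + y) ≤ T x + T y := by
    intro x1 x2
    have key : ∀ a ∈ A x1, ∀ b ∈ A x2, T (x1 + x2) ≤ a + b := by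
      rintro _ ⟨y1, rfl⟩ _ ⟨y2, rfl⟩
      have hm := csInf_le (hbdd (x1 + x2)) (hmem (x1 + x2) (y1 + y2))
      refine hm.trans ?_
      have h1 : S (y1 + y2) ≤ S y1 + S y2 := hSsub y1 y2
      have h2 : p (x1 + x2 - ((y1 : X) + (y2 : X))) ≤
          p (x1 - (y1 : X)) + p (x2 - (y2 : X)) := by
        have h := hpsub (x1 - (y1 : X)) (x2 - (y2 : X))
        have he : x1 - (y1 : X) + (x2 - (y2 : X)) = x1 + x2 - ((y1 : X) + (y2 : X)) := by
          abel
        rwa [he] at h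
      calc S (y1 + y2) + p (x1 + x2 - ((y1 + y2 : Y) : X))
          = S (y1 + y2) + p (x1 + x2 - ((y1 : X) + (y2 : X))) := by push_cast; ring_nf
        _ ≤ (S y1 + S y2) + (p (x1 - (y1 : X)) + p (x2 - (y2 : X))) :=
            add_le_add h1 h2
        _ = (S y1 + p (x1 - (y1 : X))) + (S y2 + p (x2 - (y2 : X))) := by abel
    have step1 : ∀ b ∈ A x2, T (x1 + x2) - b ≤ T x1 := by
      intro b hb
      refine le_csInf (hne x1) ?_
      intro a ha
      rw [sub_le_iff_le_add]
      exact key a ha b hb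
    have step2 : T (x1 + x2) - T x1 ≤ T x2 := by
      refine le_csInf (hne x2) ?_
      intro b hb
      exact sub_le_comm.mp (step1 b hb)
    have := sub_le_iff_le_add.mp step2
    exact this.trans_eq (add_comm _ _)
  have hhom : ∀ (l : ℝ) (x : X), 0 ≤ l → T (l • x) = l • T x := by
    intro l x hl
    rcases eq_or_lt_of_le hl with hl0 | hlpos
    · subst hl0
      rw [zero_smul, zero_smul]
      refine le_antisymm ?_ ?_
      · have h := csInf_le (hbdd 0) (hmem 0 0)
        simpa [hS0, hp0] using h
      · refine le_csInf (hne 0) ?_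
        rintro _ ⟨y, rfl⟩
        have := hkey y
        simpa [zero_sub] using this
    · have hmap : ∀ u : Y, S (l • u) + p (l • x - ((l • u : Y) : X))
          = l • (S u + p (x - (u : X))) := by
        intro u
        have h1 : S (l • u) = l • S u := hShom l u hl
        have h2 : p (l • x - ((l • u : Y) : X)) = l • p (x - (u : X)) := by
          have hc : l • x - ((l • u : Y) : X) = l • (x - (u : X)) := by
            push_cast
            rw [smul_sub]
          rw [hc, hphom l _ hl]
        rw [h1, h2, smul_add]
      refine le_antisymm ?_ ?_
      · -- T (l • x) ≤ l • T x : via l⁻¹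
        have hinv : l⁻¹ • T (l • x) ≤ T x := by
          refine le_csInf (hne x) ?_
          rintro _ ⟨u, rfl⟩
          have hm : T (l • x) ≤ l • (S u + p (x - (u : X))) := by
            rw [← hmap u]
            exact csInf_le (hbdd (l • x)) (hmem (l • x) (l • u))
          have := smul_le_smul_of_nonneg_left hm (inv_nonneg.mpr hl)
          rwa [smul_smul, inv_mul_cancel₀ hlpos.ne', one_smul] at this
        have := smul_le_smul_of_nonneg_left hinv hl
        rwa [smul_smul, mul_inv_cancel₀ hlpos.ne', one_smul] at this
      · refine le_csInf (hne (l • x)) ?_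
        rintro _ ⟨y, rfl⟩
        show l • T x ≤ S y + p (l • x - (y : X))
        have hy : l • (l⁻¹ • y) = y := by
          rw [smul_smul, mul_inv_cancel₀ hlpos.ne', one_smul]
        have heq : S y + p (l • x - (y : X)) = l • (S (l⁻¹ • y) + p (x - ((l⁻¹ • y : Y) : X))) := by
          conv_lhs => rw [← hy]
          exact hmap (l⁻¹ • y)
        rw [heq]
        exact smul_le_smul_of_nonneg_left (csInf_le (hbdd x) (hmem x (l⁻¹ • y))) hl
  exact ⟨T, hsub, hhom, hext, hle_p⟩
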